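/- A set-valued map f : D → 2^Y is convexlike on D if and only if the set f(D) + Y₊ is convex. -/

import Mathlib

open Pointwise

/-- A set-valued map `f` is convexlike on `D` iff `f(D) + Y₊` is convex. -/
theorem convexlike_iff_add_cone_convex
    {X Y : Type*} [AddCommGroup Y] [Module ℝ Y]
    [TopologicalSpace Y] [IsTopologicalAddGroup Y] [ContinuousSMul ℝ Y]
    (D : Set X) (hD : D.Nonempty) (f : X → Set Y)
    (Ypos : Set Y) (hYconv : Convex ℝ Ypos) (hY0 : (0 : Y) ∈ Ypos)
    (hYcone : ∀ t : ℝ, 0 < t → t • Ypos ⊆ Ypos) :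
    (∀ x1 ∈ D, ∀ x2 ∈ D, ∀ α : ℝ, α ∈ Set.Ioo (0 : ℝ) 1 →
        α • f x1 + (1 - α) • f x2 ⊆ (⋃ x ∈ D, f x) + Ypos) ↔
      Convex ℝ ((⋃ x ∈ D, f x) + Ypos) := by
  have hadd : ∀ z w, z ∈ Ypos → w ∈ Ypos → z + w ∈ Ypos := by
    intro z w hz hw
    have h1 : (1/2 : ℝ) • z + (1/2 : ℝ) • w ∈ Ypos :=
      hYconv hz hw (by norm_num) (by norm_num) (by norm_num)
    have h2 : (2 : ℝ) • ((1/2 : ℝ) • z + (1/2 : ℝ) • w) ∈ Ypos :=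
      hYcone 2 (by norm_num) (Set.smul_mem_smul_set h1)
    have : (2 : ℝ) • ((1/2 : ℝ) • z + (1/2 : ℝ) • w) = z + w := by
      rw [smul_add, smul_smul, smul_smul]; norm_num
    rwa [this] at h2
  constructor
  · intro hcl
    intro p hp q hq a b ha hb hab
    obtain ⟨y1, hy1, z1, hz1, rfl⟩ := hp
    obtain ⟨y2, hy2, z2, hz2, rfl⟩ := hq
    obtain ⟨x1, hx1D, hy1f⟩ : ∃ x ∈ D, y1 ∈ f x := by
      simpa using hy1
    obtain ⟨x2, hx2D, hy2f⟩ : ∃ x ∈ D, y2 ∈ f x := by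
      simpa using hy2
    rcases eq_or_lt_of_le ha with ha0 | ha0
    · -- a = 0, so b = 1
      have hb1 : b = 1 := by linarith
      subst hb1
      rw [← ha0]
      simp only [zero_smul, one_smul, zero_add]
      exact ⟨y2, by simpa using ⟨x2, hx2D, hy2f⟩, z2, hz2, rfl⟩
    rcases eq_or_lt_of_le hb with hb0 | hb0
    · have ha1 : a = 1 := by linarith
      subst ha1
      rw [← hb0]
      simp only [zero_smul, one_smul, add_zero]
      exact ⟨y1, by simpa using ⟨x1, hx1D, hy1f⟩, z1, hz1, rfl⟩
    -- main case: 0 < a, 0 < b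
    have ha1 : a < 1 := by linarith
    have hmem : a • y1 + (1 - a) • y2 ∈ (⋃ x ∈ D, f x) + Ypos := by
      apply hcl x1 hx1D x2 hx2D a ⟨ha0, ha1⟩
      exact Set.add_mem_add (Set.smul_mem_smul_set hy1f) (Set.smul_mem_smul_set hy2f)
    obtain ⟨y, hy, z, hz, hyz⟩ := hmem
    have hzz : a • z1 + b • z2 ∈ Ypos := hYconv hz1 hz2 ha hb hab
    refine ⟨y, hy, z + (a • z1 + b • z2), hadd _ _ hz hzz, ?_⟩
    have hb' : b = 1 - a := by linarith
    subst hb'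
    simp only at hyz ⊢
    have heq : a • (y1 + z1) + (1 - a) • (y2 + z2)
        = (a • y1 + (1 - a) • y2) + (a • z1 + (1 - a) • z2) := by module
    rw [heq, ← hyz]
    abel
  · intro hconv x1 hx1 x2 hx2 α hα p hp
    obtain ⟨u, hu, v, hv, rfl⟩ := hp
    obtain ⟨y1, hy1, rfl⟩ := hu
    obtain ⟨y2, hy2, rfl⟩ := hv
    have hm1 : y1 ∈ (⋃ x ∈ D, f x) + Ypos :=
      ⟨y1, by simpa using ⟨x1, hx1, hy1⟩, 0, hY0, (add_zero _)⟩
    have hm2 : y2 ∈ (⋃ x ∈ D, f x) + Ypos :=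
      ⟨y2, by simpa using ⟨x2, hx2, hy2⟩, 0, hY0, (add_zero _)⟩
    exact hconv hm1 hm2 (le_of_lt hα.1) (by linarith [hα.2]) (by ring)
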